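/- For a Gaussian distribution P = N(μ, σ²) with σ > 0 and any real y, the continuous ranked probability score CRPS(P, y) = ∫_ℝ (F_P(t) − 1{y ≤ t})² dt equals σ(2φ(z) + z(2Φ(z) − 1) − 1/√π), where z = (y − μ)/σ. -/

import Mathlib

open MeasureTheory Real Filter Set

/-- standard normal density -/
noncomputable def stdGaussPDF (t : ℝ) : ℝ := (Real.sqrt (2 * Real.pi))⁻¹ * Real.exp (-(t ^ 2) / 2)

/-- standard normal cumulative distribution function -/
noncomputable def stdGaussCDF (z : ℝ) : ℝ := ∫ t in Set.Iio z, stdGaussPDF t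

lemma pdf_cont : Continuous stdGaussPDF := by
  unfold stdGaussPDF; fun_prop

lemma pdf_nonneg (t : ℝ) : 0 ≤ stdGaussPDF t := by
  unfold stdGaussPDF; positivity

lemma sqrt_two_pi_pos : (0:ℝ) < Real.sqrt (2 * Real.pi) :=
  Real.sqrt_pos.mpr (by positivity)

lemma pdf_le (t : ℝ) : stdGaussPDF t ≤ Real.exp (-(t ^ 2) / 2) := by
  unfold stdGaussPDF
  have h1 : (1:ℝ) ≤ Real.sqrt (2 * Real.pi) := by
    rw [show (1:ℝ) = Real.sqrt 1 by simp]
    exact Real.sqrt_le_sqrt (by nlinarith [Real.pi_gt_three])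
  have h2 : (Real.sqrt (2 * Real.pi))⁻¹ ≤ 1 := by
    rw [inv_le_one_iff₀]; right; exact h1
  nlinarith [Real.exp_pos (-(t ^ 2) / 2), le_of_lt (inv_pos.mpr sqrt_two_pi_pos)]

lemma pdf_neg (t : ℝ) : stdGaussPDF (-t) = stdGaussPDF t := by
  simp [stdGaussPDF, neg_sq]

lemma pdf_integrable : Integrable stdGaussPDF := by
  have h : Integrable (fun t : ℝ => (Real.sqrt (2 * Real.pi))⁻¹ * Real.exp (-(2⁻¹) * t ^ 2)) :=
    (integrable_exp_neg_mul_sq (by norm_num : (0:ℝ) < 2⁻¹)).const_mul _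
  have he : (fun t : ℝ => (Real.sqrt (2 * Real.pi))⁻¹ * Real.exp (-(2⁻¹) * t ^ 2))
      = stdGaussPDF := by
    funext t; unfold stdGaussPDF; congr 1; ring_nf
  rwa [he] at h

lemma pdf_integral : ∫ t, stdGaussPDF t = 1 := by
  have h : ∫ t : ℝ, Real.exp (-(2⁻¹) * t ^ 2) = Real.sqrt (Real.pi / 2⁻¹) :=
    integral_gaussian 2⁻¹
  have h2 : ∫ t, stdGaussPDF t
      = (Real.sqrt (2 * Real.pi))⁻¹ * ∫ t : ℝ, Real.exp (-(2⁻¹) * t ^ 2) := by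
    rw [← integral_const_mul]
    refine integral_congr_ae (Eventually.of_forall fun t => ?_)
    unfold stdGaussPDF; congr 1; ring_nf
  rw [h2, h, show Real.pi / 2⁻¹ = 2 * Real.pi by ring]
  have := sqrt_two_pi_pos
  field_simp

lemma hasDerivAt_pdf (t : ℝ) : HasDerivAt stdGaussPDF (-t * stdGaussPDF t) t := by
  have h1 : HasDerivAt (fun x : ℝ => -(x ^ 2) / 2) (-t) t := by
    have := ((hasDerivAt_pow 2 t).neg).div_const 2
    refine this.congr_deriv ?_
    push_cast
    ring
  have h2 := (h1.exp).const_mul ((Real.sqrt (2 * Real.pi))⁻¹)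
  refine h2.congr_deriv ?_
  unfold stdGaussPDF; ring

lemma cdf_eq_Iic (z : ℝ) : stdGaussCDF z = ∫ t in Iic z, stdGaussPDF t :=
  setIntegral_congr_set Iio_ae_eq_Iic

lemma cdf_sub (a b : ℝ) :
    stdGaussCDF b - stdGaussCDF a = ∫ t in a..b, stdGaussPDF t := by
  rw [cdf_eq_Iic, cdf_eq_Iic]
  exact intervalIntegral.integral_Iic_sub_Iic pdf_integrable.integrableOn pdf_integrable.integrableOn

lemma hasDerivAt_cdf (x : ℝ) : HasDerivAt stdGaussCDF (stdGaussPDF x) x := by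
  have key : stdGaussCDF = fun u => stdGaussCDF 0 + ∫ t in (0:ℝ)..u, stdGaussPDF t := by
    funext u
    rw [← cdf_sub]; ring
  rw [key]
  have h := intervalIntegral.integral_hasDerivAt_right (a := (0:ℝ)) (b := x)
    (pdf_integrable.intervalIntegrable)
    (pdf_cont.stronglyMeasurable.stronglyMeasurableAtFilter)
    (pdf_cont.continuousAt (x := x))
  exact h.const_add _

lemma cdf_nonneg (z : ℝ) : 0 ≤ stdGaussCDF z :=
  setIntegral_nonneg measurableSet_Iio fun t _ => pdf_nonneg t

lemma cdf_le_one (z : ℝ) : stdGaussCDF z ≤ 1 := by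
  rw [← pdf_integral]
  exact setIntegral_le_integral pdf_integrable (Eventually.of_forall pdf_nonneg)

lemma one_sub_cdf (z : ℝ) : 1 - stdGaussCDF z = ∫ t in Ioi z, stdGaussPDF t := by
  have h := intervalIntegral.integral_Iic_add_Ioi (μ := volume) (b := z)
    pdf_integrable.integrableOn pdf_integrable.integrableOn
  rw [pdf_integral] at h
  rw [cdf_eq_Iic]
  linarith

lemma sq_tendsto_atTop : Tendsto (fun t : ℝ => t ^ 2) atTop atTop :=
  tendsto_pow_atTop two_ne_zero

lemma sq_tendsto_atBot : Tendsto (fun t : ℝ => t ^ 2) atBot atTop := by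
  have h := (tendsto_pow_atTop (two_ne_zero)).comp tendsto_neg_atBot_atTop (α := ℝ)
  simpa [Function.comp_def, neg_sq] using h

lemma pdf_tendsto_zero {l : Filter ℝ} (hl : Tendsto (fun t : ℝ => t ^ 2) l atTop) :
    Tendsto stdGaussPDF l (nhds 0) := by
  have h1 : Tendsto (fun t : ℝ => -(t ^ 2) / 2) l atBot := by
    apply Tendsto.atBot_div_const (by norm_num : (0:ℝ) < 2)
    exact tendsto_neg_atTop_atBot.comp hl
  have h2 : Tendsto (fun t : ℝ => Real.exp (-(t ^ 2) / 2)) l (nhds 0) :=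
    Real.tendsto_exp_atBot.comp h1
  have h3 := h2.const_mul ((Real.sqrt (2 * Real.pi))⁻¹)
  rw [show (0:ℝ) = (Real.sqrt (2 * Real.pi))⁻¹ * 0 by ring]
  exact h3

lemma pdf_tendsto_zero_atTop : Tendsto stdGaussPDF atTop (nhds 0) :=
  pdf_tendsto_zero sq_tendsto_atTop

lemma pdf_tendsto_zero_atBot : Tendsto stdGaussPDF atBot (nhds 0) :=
  pdf_tendsto_zero sq_tendsto_atBot

lemma cdf_neg (z : ℝ) : stdGaussCDF (-z) = 1 - stdGaussCDF z := by
  rw [one_sub_cdf]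
  have h := integral_comp_neg_Ioi z stdGaussPDF
  rw [cdf_eq_Iic]
  rw [← h]
  refine setIntegral_congr_fun measurableSet_Ioi fun t _ => ?_
  rw [pdf_neg]

lemma integrableOn_mul_pdf (s : ℝ) (hs : 0 ≤ s) :
    IntegrableOn (fun t => t * stdGaussPDF t) (Ioi s) := by
  refine integrableOn_Ioi_deriv_of_nonneg' (g := fun t => -stdGaussPDF t) (l := 0)
    (fun x _ => ?_) (fun x hx => mul_nonneg (le_trans hs (le_of_lt hx)) (pdf_nonneg x))
    (by simpa using pdf_tendsto_zero_atTop.neg)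
  have := (hasDerivAt_pdf x).neg
  refine this.congr_deriv ?_; ring

lemma integral_Ioi_mul_pdf (s : ℝ) (hs : 0 ≤ s) :
    ∫ t in Ioi s, t * stdGaussPDF t = stdGaussPDF s := by
  have h := integral_Ioi_of_hasDerivAt_of_nonneg' (g := fun t => -stdGaussPDF t)
    (g' := fun t => t * stdGaussPDF t) (a := s) (l := 0)
    (fun x _ => by have := (hasDerivAt_pdf x).neg; refine this.congr_deriv ?_; ring)
    (fun x hx => mul_nonneg (le_trans hs (le_of_lt hx)) (pdf_nonneg x))
    (by simpa using pdf_tendsto_zero_atTop.neg)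
  rw [h]; ring

lemma upper_tail (s : ℝ) (hs : 1 ≤ s) : 1 - stdGaussCDF s ≤ stdGaussPDF s := by
  rw [one_sub_cdf, ← integral_Ioi_mul_pdf s (by linarith)]
  refine setIntegral_mono_on pdf_integrable.integrableOn
    (integrableOn_mul_pdf s (by linarith)) measurableSet_Ioi fun t ht => ?_
  have h1 : (1:ℝ) ≤ t := le_trans hs (le_of_lt ht)
  nlinarith [pdf_nonneg t]

lemma lower_tail (s : ℝ) (hs : s ≤ -1) : stdGaussCDF s ≤ stdGaussPDF s := by
  have h := upper_tail (-s) (by linarith)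
  rw [cdf_neg, pdf_neg] at h
  linarith

lemma cdf_tendsto_zero_atBot : Tendsto stdGaussCDF atBot (nhds 0) := by
  refine tendsto_of_tendsto_of_tendsto_of_le_of_le' tendsto_const_nhds pdf_tendsto_zero_atBot
    (Eventually.of_forall cdf_nonneg) ?_
  filter_upwards [eventually_le_atBot (-1 : ℝ)] with s hs
  exact lower_tail s hs

lemma cdf_tendsto_one_atTop : Tendsto stdGaussCDF atTop (nhds 1) := by
  have h : Tendsto (fun s => 1 - stdGaussCDF s) atTop (nhds 0) := by
    refine tendsto_of_tendsto_of_tendsto_of_le_of_le' tendsto_const_nhds pdf_tendsto_zero_atTop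
      (Eventually.of_forall fun s => by linarith [cdf_le_one s]) ?_
    filter_upwards [eventually_ge_atTop (1 : ℝ)] with s hs
    exact upper_tail s hs
  have h2 := (tendsto_const_nhds (x := (1:ℝ)) (f := atTop)).sub h
  simpa using h2

lemma pdf_sq (s : ℝ) : 2 * stdGaussPDF s ^ 2
    = (Real.sqrt Real.pi)⁻¹ * (stdGaussPDF (Real.sqrt 2 * s) * (Real.sqrt 2 * 1)) := by
  have h2 : (0:ℝ) < Real.sqrt 2 := Real.sqrt_pos.mpr (by norm_num)
  have hp : (0:ℝ) < Real.sqrt Real.pi := Real.sqrt_pos.mpr Real.pi_pos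
  have e3 : Real.sqrt (2 * Real.pi) = Real.sqrt 2 * Real.sqrt Real.pi :=
    Real.sqrt_mul (by norm_num) _
  have e2 : -((Real.sqrt 2 * s) ^ 2) / 2 = -(s ^ 2) := by
    rw [mul_pow, Real.sq_sqrt (by norm_num : (0:ℝ) ≤ 2)]; ring
  have e1 : Real.exp (-(s ^ 2) / 2) ^ 2 = Real.exp (-(s ^ 2)) := by
    rw [sq, ← Real.exp_add]; ring_nf
  have h22 : Real.sqrt 2 * Real.sqrt 2 = 2 := Real.mul_self_sqrt (by norm_num)
  unfold stdGaussPDF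
  rw [e2, e3, mul_pow, e1]
  field_simp
  rw [Real.sq_sqrt (by norm_num : (0:ℝ) ≤ 2)]

noncomputable def Gfun (s : ℝ) : ℝ :=
  s * (1 - stdGaussCDF s) ^ 2 - 2 * (1 - stdGaussCDF s) * stdGaussPDF s
    - (Real.sqrt Real.pi)⁻¹ * stdGaussCDF (Real.sqrt 2 * s)

lemma hasDerivAt_G (s : ℝ) : HasDerivAt Gfun ((1 - stdGaussCDF s) ^ 2) s := by
  have hΦ := hasDerivAt_cdf s
  have hφ := hasDerivAt_pdf s
  have hu : HasDerivAt (fun x => 1 - stdGaussCDF x) (-stdGaussPDF s) s := by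
    have := (hasDerivAt_const s (1:ℝ)).sub hΦ
    simp at this
    exact this
  have hu2 := hu.pow 2
  have h1 := (hasDerivAt_id s).mul hu2
  have h2 := ((hu.const_mul (2:ℝ)).mul hφ)
  have hlin : HasDerivAt (fun x : ℝ => Real.sqrt 2 * x) (Real.sqrt 2 * 1) s := by
    simpa using (hasDerivAt_id s).const_mul (Real.sqrt 2)
  have hΨ := ((hasDerivAt_cdf (Real.sqrt 2 * s)).comp s hlin).const_mul
    ((Real.sqrt Real.pi)⁻¹)
  have hG := h1.sub (h2.add hΨ)
  have hGfun : Gfun = fun x => (id x * (1 - stdGaussCDF x) ^ 2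
      - (2 * (1 - stdGaussCDF x) * stdGaussPDF x
        + (Real.sqrt Real.pi)⁻¹ * (stdGaussCDF ∘ (fun y => Real.sqrt 2 * y)) x)) := by
    funext x; unfold Gfun; simp only [Function.comp, id_eq]; ring
  rw [hGfun]
  refine hG.congr_deriv ?_
  have key := pdf_sq s
  simp only [id_eq, pow_one, Pi.pow_apply]
  push_cast
  linear_combination key

lemma term1_tendsto : Tendsto (fun s => s * (1 - stdGaussCDF s) ^ 2) atTop (nhds 0) := by
  refine tendsto_of_tendsto_of_tendsto_of_le_of_le' tendsto_const_nhds
    (Real.tendsto_exp_neg_atTop_nhds_zero) ?_ ?_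
  · filter_upwards [eventually_ge_atTop (0 : ℝ)] with s hs
    have := cdf_le_one s
    nlinarith [sq_nonneg (1 - stdGaussCDF s)]
  · filter_upwards [eventually_ge_atTop (2 : ℝ)] with s hs
    have h1 : 1 - stdGaussCDF s ≤ Real.exp (-(s ^ 2) / 2) :=
      le_trans (upper_tail s (by linarith)) (pdf_le s)
    have h0 : 0 ≤ 1 - stdGaussCDF s := by linarith [cdf_le_one s]
    have hs0 : (0:ℝ) ≤ s := by linarith
    calc s * (1 - stdGaussCDF s) ^ 2
        ≤ s * (Real.exp (-(s ^ 2) / 2)) ^ 2 :=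
          mul_le_mul_of_nonneg_left (pow_le_pow_left₀ h0 h1 2) hs0
      _ ≤ Real.exp s * (Real.exp (-(s ^ 2) / 2)) ^ 2 := by
          nlinarith [Real.add_one_le_exp s, sq_nonneg (Real.exp (-(s ^ 2) / 2))]
      _ ≤ Real.exp (-s) := by
          rw [sq, ← Real.exp_add, ← Real.exp_add]
          exact Real.exp_le_exp.mpr (by nlinarith)

lemma term2_tendsto : Tendsto (fun s => 2 * (1 - stdGaussCDF s) * stdGaussPDF s)
    atTop (nhds 0) := by
  refine tendsto_of_tendsto_of_tendsto_of_le_of_le' tendsto_const_nhds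
    (by simpa using pdf_tendsto_zero_atTop.const_mul (2:ℝ)) ?_ ?_
  · exact Eventually.of_forall fun s => by
      nlinarith [cdf_le_one s, pdf_nonneg s]
  · exact Eventually.of_forall fun s => by
      nlinarith [cdf_nonneg s, pdf_nonneg s]

lemma term3_tendsto : Tendsto (fun s => (Real.sqrt Real.pi)⁻¹ * stdGaussCDF (Real.sqrt 2 * s))
    atTop (nhds ((Real.sqrt Real.pi)⁻¹ * 1)) := by
  have hin : Tendsto (fun s : ℝ => Real.sqrt 2 * s) atTop atTop :=
    Tendsto.const_mul_atTop (Real.sqrt_pos.mpr (by norm_num)) tendsto_id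
  exact (cdf_tendsto_one_atTop.comp hin).const_mul _

lemma tendsto_G_atTop : Tendsto Gfun atTop (nhds (-(Real.sqrt Real.pi)⁻¹)) := by
  have h := (term1_tendsto.sub term2_tendsto).sub term3_tendsto
  unfold Gfun
  simpa using h

lemma integrableOn_q_Ioi (a : ℝ) :
    IntegrableOn (fun s => (1 - stdGaussCDF s) ^ 2) (Ioi a) :=
  integrableOn_Ioi_deriv_of_nonneg' (fun x _ => hasDerivAt_G x)
    (fun x _ => sq_nonneg _) tendsto_G_atTop

lemma integral_q_Ioi (a : ℝ) :
    ∫ s in Ioi a, (1 - stdGaussCDF s) ^ 2 = -(Real.sqrt Real.pi)⁻¹ - Gfun a :=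
  integral_Ioi_of_hasDerivAt_of_nonneg' (fun x _ => hasDerivAt_G x)
    (fun x _ => sq_nonneg _) tendsto_G_atTop

lemma integrableOn_neg_Iio {f : ℝ → ℝ} {a : ℝ} (h : IntegrableOn f (Ioi a)) :
    IntegrableOn (fun x => f (-x)) (Iio (-a)) := by
  have h1 : Integrable (indicator (Ioi a) f) :=
    (integrable_indicator_iff measurableSet_Ioi).2 h
  have h2 := h1.comp_neg
  have h3 : (fun x => indicator (Ioi a) f (-x))
      = indicator (Iio (-a)) (fun x => f (-x)) := by
    funext x
    simp only [indicator_apply, mem_Ioi, mem_Iio, lt_neg]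
  rw [h3] at h2
  exact (integrable_indicator_iff measurableSet_Iio).1 h2

lemma cdf_sq_eq (s : ℝ) : stdGaussCDF s ^ 2 = (1 - stdGaussCDF (-s)) ^ 2 := by
  rw [cdf_neg]; ring

lemma integrableOn_p_Iio (a : ℝ) :
    IntegrableOn (fun s => stdGaussCDF s ^ 2) (Iio a) := by
  have h := integrableOn_neg_Iio (integrableOn_q_Ioi (-a))
  rw [neg_neg] at h
  refine h.congr_fun (fun x _ => ?_) measurableSet_Iio
  exact (cdf_sq_eq x).symm

lemma integral_p_Iio (a : ℝ) :
    ∫ s in Iio a, stdGaussCDF s ^ 2 = -(Real.sqrt Real.pi)⁻¹ - Gfun (-a) := by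
  have h1 : ∫ s in Iio a, stdGaussCDF s ^ 2
      = ∫ s in Iic a, (fun u => (1 - stdGaussCDF u) ^ 2) (-s) := by
    rw [setIntegral_congr_set Iio_ae_eq_Iic]
    exact setIntegral_congr_fun measurableSet_Iic fun s _ => cdf_sq_eq s
  rw [h1]
  exact (integral_comp_neg_Iic a (fun u => (1 - stdGaussCDF u) ^ 2)).trans
    (integral_q_Ioi (-a))

lemma crps_std (z : ℝ) :
    ∫ s : ℝ, (stdGaussCDF s - (if z ≤ s then (1:ℝ) else 0)) ^ 2
      = 2 * stdGaussPDF z + z * (2 * stdGaussCDF z - 1) - 1 / Real.sqrt Real.pi := by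
  set g := fun s : ℝ => (stdGaussCDF s - (if z ≤ s then (1:ℝ) else 0)) ^ 2 with hg
  have hIio : ∀ s ∈ Iio z, g s = stdGaussCDF s ^ 2 := fun s hs => by
    have : ¬ z ≤ s := not_le.mpr hs
    simp [hg, if_neg this]
  have hIoi : ∀ s ∈ Ioi z, g s = (1 - stdGaussCDF s) ^ 2 := fun s hs => by
    simp only [hg, if_pos (le_of_lt (mem_Ioi.mp hs))]; ring
  have int1 : IntegrableOn g (Iio z) :=
    (integrableOn_p_Iio z).congr_fun (fun s hs => (hIio s hs).symm) measurableSet_Iio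
  have int2 : IntegrableOn g (Ici z) := by
    rw [integrableOn_Ici_iff_integrableOn_Ioi]
    exact (integrableOn_q_Ioi z).congr_fun (fun s hs => (hIoi s hs).symm) measurableSet_Ioi
  rw [← intervalIntegral.integral_Iio_add_Ici (b := z) int1 int2]
  have e1 : ∫ s in Iio z, g s = -(Real.sqrt Real.pi)⁻¹ - Gfun (-z) := by
    rw [setIntegral_congr_fun measurableSet_Iio hIio]
    exact integral_p_Iio z
  have e2 : ∫ s in Ici z, g s = -(Real.sqrt Real.pi)⁻¹ - Gfun z := by
    rw [← setIntegral_congr_set Ioi_ae_eq_Ici,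
      setIntegral_congr_fun measurableSet_Ioi hIoi]
    exact integral_q_Ioi z
  rw [e1, e2]
  unfold Gfun
  rw [mul_neg, cdf_neg, cdf_neg, pdf_neg, one_div]
  ring

theorem crps_gaussian_closed_form (μ σ y : ℝ) (hσ : 0 < σ) :
    (∫ t : ℝ, (stdGaussCDF ((t - μ) / σ) - (if y ≤ t then (1 : ℝ) else 0)) ^ 2) =
      σ * (2 * stdGaussPDF ((y - μ) / σ) +
        ((y - μ) / σ) * (2 * stdGaussCDF ((y - μ) / σ) - 1) - 1 / Real.sqrt Real.pi) := by
  set z := (y - μ) / σ with hz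
  set F := fun s : ℝ => (stdGaussCDF s - (if z ≤ s then (1:ℝ) else 0)) ^ 2 with hF
  have hfun : (fun t : ℝ => (stdGaussCDF ((t - μ) / σ) - (if y ≤ t then (1:ℝ) else 0)) ^ 2)
      = fun t : ℝ => F ((t - μ) / σ) := by
    funext t
    have hiff : (y ≤ t) = (z ≤ (t - μ) / σ) := by
      simp only [eq_iff_iff, hz]
      rw [div_le_div_iff_of_pos_right hσ, sub_le_sub_iff_right]
    rw [hF]
    simp only [hiff]
  rw [hfun]
  have h1 : ∫ t : ℝ, F ((t - μ) / σ) = ∫ t : ℝ, F (t / σ) :=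
    integral_sub_right_eq_self (μ := volume) (fun u => F (u / σ)) μ
  have h2 : ∫ t : ℝ, F (t / σ) = |σ| • ∫ s, F s := Measure.integral_comp_div F σ
  rw [h1, h2, hF]
  rw [crps_std z, smul_eq_mul, abs_of_pos hσ]
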